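/- arXiv:2106.13709 — 3 statements merged into one kernel-verified Lean document; each statement's English description precedes it below -/
import Mathlib

section
/- Theorem 3 (closed periodic curves stay in the convex hull): let r_0, r_1, ..., r_{N-1} be N >= 1 points in R^D taken on a closed periodic orbit. Then the closed shape r_kappa is a curve of period N, i.e. r_kappa(t + N) = r_kappa(t) for all real t, and r_kappa(t) lies in the convex hull of {r_0, ..., r_{N-1}} for every kappa > 0 and every real t > 0. -/
/-- The `B_κ`-function: `B_κ(x,y) = (1/2)(tanh((x+y)/κ) - tanh((x-y)/κ))`. -/
noncomputable def Bk (κ x y : ℝ) : ℝ :=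
  (1/2) * (Real.tanh ((x + y) / κ) - Real.tanh ((x - y) / κ))

/-- The periodic `B_κ`-function: `Π_κ(x,y;T) = B_κ(sin(πx/T), sin(πy/T))`. -/
noncomputable def Pik (κ x y T : ℝ) : ℝ :=
  Bk κ (Real.sin (Real.pi * x / T)) (Real.sin (Real.pi * y / T))

lemma tanh_lt_tanh_aux {a b : ℝ} (h : a < b) : Real.tanh a < Real.tanh b := by
  rw [Real.tanh_eq_sinh_div_cosh, Real.tanh_eq_sinh_div_cosh,
    div_lt_div_iff₀ (Real.cosh_pos _) (Real.cosh_pos _)]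
  have h1 : 0 < Real.sinh (b - a) := Real.sinh_pos_iff.2 (by linarith)
  rw [Real.sinh_sub] at h1
  linarith

lemma Bk_pos {κ x y : ℝ} (hκ : 0 < κ) (hy : 0 < y) : 0 < Bk κ x y := by
  unfold Bk
  have : Real.tanh ((x - y) / κ) < Real.tanh ((x + y) / κ) :=
    tanh_lt_tanh_aux ((div_lt_div_iff_of_pos_right hκ).2 (by linarith))
  linarith

lemma Bk_even_left (κ x y : ℝ) : Bk κ (-x) y = Bk κ x y := by
  unfold Bk
  have h1 : (-x + y) = -(x - y) := by ring
  have h2 : (-x - y) = -(x + y) := by ring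
  rw [h1, h2, neg_div, neg_div, Real.tanh_neg, Real.tanh_neg]
  ring


/-- The closed shape over landmarks `r 0, …, r (N-1)` in `ℝ^D`:
`r_κ(t) = (∑_j Π_κ(t-j,1/2;N) r_j) / (∑_j Π_κ(t-j,1/2;N))`. -/
noncomputable def closedShape (D N : ℕ) (r : ℕ → EuclideanSpace ℝ (Fin D)) (κ t : ℝ) :
    EuclideanSpace ℝ (Fin D) :=
  (∑ j ∈ Finset.range N, Pik κ (t - j) (1/2) N)⁻¹ •
    ∑ j ∈ Finset.range N, Pik κ (t - j) (1/2) N • r j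

/-- Theorem 3: the closed shape over `N` landmarks is a closed curve of period `N`, and it
is contained in the convex hull of the landmarks for every `κ > 0` and every `t > 0`. -/
theorem closedShape_period_and_convexHull (D N : ℕ) (hN : 1 ≤ N)
    (r : ℕ → EuclideanSpace ℝ (Fin D)) (κ : ℝ) (hκ : 0 < κ) :
    (∀ t : ℝ, closedShape D N r κ (t + N) = closedShape D N r κ t) ∧
    (∀ t : ℝ, 0 < t →
      closedShape D N r κ t ∈ convexHull ℝ (r '' (Set.Iic (N - 1)))) := by
  have hN0 : (0 : ℝ) < N := by exact_mod_cast hN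
  have hNne : (N : ℝ) ≠ 0 := ne_of_gt hN0
  have hsinhalf : 0 < Real.sin (Real.pi * (1/2) / N) := by
    apply Real.sin_pos_of_pos_of_lt_pi
    · positivity
    · rw [div_lt_iff₀ hN0]
      have : (1 : ℝ) ≤ N := by exact_mod_cast hN
      nlinarith [Real.pi_pos]
  have hpos : ∀ s : ℝ, 0 < Pik κ s (1/2) N := fun s => Bk_pos hκ hsinhalf
  have hsumpos : ∀ t : ℝ, 0 < ∑ j ∈ Finset.range N, Pik κ (t - j) (1/2) N := by
    intro t
    apply Finset.sum_pos (fun j _ => hpos _)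
    exact ⟨0, Finset.mem_range.2 hN⟩
  constructor
  · intro t
    have hper : ∀ j : ℕ, Pik κ (t + N - j) (1/2) N = Pik κ (t - j) (1/2) N := by
      intro j
      unfold Pik
      have harg : Real.pi * (t + N - j) / N = Real.pi * (t - j) / N + Real.pi := by
        field_simp; ring
      rw [harg, Real.sin_add_pi, Bk_even_left]
    simp only [closedShape, hper]
  · intro t _
    have key := (Finset.range N).centerMass_mem_convexHull
      (w := fun j => Pik κ (t - j) (1/2) N) (z := r)
      (fun j _ => (hpos _).le) (hsumpos t)
      (s := r '' (Set.Iic (N - 1)))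
      (fun j hj => Set.mem_image_of_mem r (Set.mem_Iic.2 (Nat.le_sub_one_of_lt (Finset.mem_range.1 hj))))
    rwa [Finset.centerMass] at key
end

section
/- Landmark recovery in the kappa -> 0 limit: let r_0, ..., r_{N-1} be N >= 1 points in R^D. For every integer n with 0 <= n <= N-1, the open shape satisfies: the limit as kappa -> 0+ of r_kappa(n) equals r_n. -/
open Filter Topology Real

lemma tendsto_tanh_atTop : Tendsto Real.tanh atTop (𝓝 1) := by
  have hfun : ∀ x : ℝ, Real.tanh x = (1 - Real.exp (-(2*x))) / (1 + Real.exp (-(2*x))) := by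
    intro x
    have h1 : (0:ℝ) < Real.exp x + Real.exp (-x) := by positivity
    have h2 : Real.exp (-(2*x)) = Real.exp (-x) * Real.exp (-x) := by
      rw [← Real.exp_add]; ring_nf
    have hx : Real.exp x * Real.exp (-x) = 1 := by
      rw [← Real.exp_add]; simp
    rw [Real.tanh_eq_sinh_div_cosh, Real.sinh_eq, Real.cosh_eq]
    have hstep : (Real.exp x - Real.exp (-x)) / 2 / ((Real.exp x + Real.exp (-x)) / 2)
        = (Real.exp x - Real.exp (-x)) / (Real.exp x + Real.exp (-x)) := by
      field_simp
    rw [hstep, div_eq_div_iff h1.ne' (by positivity : (0:ℝ) < 1 + Real.exp (-(2*x))).ne', h2]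
    linear_combination (2 * Real.exp (-x)) * hx
  have hexp : Tendsto (fun x : ℝ => Real.exp (-(2*x))) atTop (𝓝 0) := by
    apply Real.tendsto_exp_atBot.comp
    exact tendsto_neg_atBot_iff.mpr (tendsto_id.const_mul_atTop two_pos)
  have hc : Tendsto (fun _ : ℝ => (1:ℝ)) atTop (𝓝 1) := tendsto_const_nhds
  have h := Tendsto.div (hc.sub hexp) (hc.add hexp) (by norm_num : (1:ℝ) + 0 ≠ 0)
  simp only [sub_zero, add_zero, div_one] at h
  exact h.congr fun x => (hfun x).symm

lemma tendsto_tanh_atBot : Tendsto Real.tanh atBot (𝓝 (-1)) := by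
  have h := tendsto_tanh_atTop.comp (tendsto_neg_atBot_atTop)
  have h2 := h.neg
  simp only [Function.comp_def, Real.tanh_neg, neg_neg] at h2
  exact h2

lemma tendsto_div_pos {c : ℝ} (hc : 0 < c) :
    Tendsto (fun κ : ℝ => c / κ) (nhdsWithin 0 (Set.Ioi 0)) atTop := by
  have h := tendsto_inv_nhdsGT_zero.const_mul_atTop hc
  simpa [div_eq_mul_inv] using h

lemma tanh_div_tendsto_one {c : ℝ} (hc : 0 < c) :
    Tendsto (fun κ : ℝ => Real.tanh (c / κ)) (nhdsWithin 0 (Set.Ioi 0)) (𝓝 1) :=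
  tendsto_tanh_atTop.comp (tendsto_div_pos hc)

lemma tanh_div_tendsto_neg_one {c : ℝ} (hc : c < 0) :
    Tendsto (fun κ : ℝ => Real.tanh (c / κ)) (nhdsWithin 0 (Set.Ioi 0)) (𝓝 (-1)) := by
  have h := (tanh_div_tendsto_one (neg_pos.mpr hc)).neg
  simp only [← Real.tanh_neg, neg_div, neg_neg] at h
  simpa using h

lemma bk_limit (x : ℝ) (h : x + 1/2 ≠ 0) (h' : x - 1/2 ≠ 0) :
    Tendsto (fun κ : ℝ => Bk κ x (1/2)) (nhdsWithin 0 (Set.Ioi 0))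
      (𝓝 (if -(1/2) < x ∧ x < 1/2 then 1 else 0)) := by
  have key : ∀ a b : ℝ,
      Tendsto (fun κ : ℝ => Real.tanh ((x + 1/2) / κ)) (nhdsWithin 0 (Set.Ioi 0)) (𝓝 a) →
      Tendsto (fun κ : ℝ => Real.tanh ((x - 1/2) / κ)) (nhdsWithin 0 (Set.Ioi 0)) (𝓝 b) →
      Tendsto (fun κ : ℝ => Bk κ x (1/2)) (nhdsWithin 0 (Set.Ioi 0)) (𝓝 ((1/2) * (a - b))) :=
    fun a b ha hb => (ha.sub hb).const_mul _
  rcases lt_or_gt_of_ne h with h1 | h1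
  · have h2 : x - 1/2 < 0 := by linarith
    have := key _ _ (tanh_div_tendsto_neg_one h1) (tanh_div_tendsto_neg_one h2)
    rw [if_neg (by intro ⟨hl, _⟩; linarith)]
    simpa using this
  · rcases lt_or_gt_of_ne h' with h2 | h2
    · have := key _ _ (tanh_div_tendsto_one h1) (tanh_div_tendsto_neg_one h2)
      rw [if_pos ⟨by linarith, by linarith⟩]
      norm_num at this ⊢
      exact this
    · have := key _ _ (tanh_div_tendsto_one h1) (tanh_div_tendsto_one h2)
      rw [if_neg (by intro ⟨_, hr⟩; linarith)]
      simpa using this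

/-- The open shape over landmarks `r 0, …, r (N-1)` in `ℝ^D`:
`r_κ(t) = (∑_j B_κ(t-j,1/2) r_j) / (∑_j B_κ(t-j,1/2))`. -/
noncomputable def openShape (D N : ℕ) (r : ℕ → EuclideanSpace ℝ (Fin D)) (κ t : ℝ) :
    EuclideanSpace ℝ (Fin D) :=
  (∑ j ∈ Finset.range N, Bk κ (t - j) (1/2))⁻¹ •
    ∑ j ∈ Finset.range N, Bk κ (t - j) (1/2) • r j

/-- Landmark recovery in the `κ → 0⁺` limit: `r_κ(n) → r_n` for every `0 ≤ n ≤ N-1`. -/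
theorem openShape_tendsto_landmark (D N : ℕ) (hN : 1 ≤ N)
    (r : ℕ → EuclideanSpace ℝ (Fin D)) (n : ℕ) (hn : n ≤ N - 1) :
    Filter.Tendsto (fun κ : ℝ => openShape D N r κ (n : ℝ))
      (nhdsWithin 0 (Set.Ioi 0)) (nhds (r n)) := by
  have hnN : n < N := by omega
  set ind : ℕ → ℝ := fun j =>
    if -(1/2) < (n:ℝ) - j ∧ (n:ℝ) - j < 1/2 then 1 else 0 with hind_def
  have hne : ∀ j : ℕ, ((n:ℝ) - j) + 1/2 ≠ 0 := by
    intro j hh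
    have h2 : (2:ℝ) * ((n:ℤ) - (j:ℤ)) = -1 := by push_cast; linarith
    have h3 : (2:ℤ) * ((n:ℤ) - (j:ℤ)) = -1 := by exact_mod_cast h2
    omega
  have hne' : ∀ j : ℕ, ((n:ℝ) - j) - 1/2 ≠ 0 := by
    intro j hh
    have h2 : (2:ℝ) * ((n:ℤ) - (j:ℤ)) = 1 := by push_cast; linarith
    have h3 : (2:ℤ) * ((n:ℤ) - (j:ℤ)) = 1 := by exact_mod_cast h2
    omega
  have hind : ∀ j : ℕ, ind j = if j = n then (1:ℝ) else 0 := by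
    intro j
    rcases eq_or_ne j n with rfl | hjn
    · simp [hind_def]
    · rw [hind_def, if_neg hjn]
      simp only
      rw [if_neg]
      rintro ⟨hl, hr⟩
      have h2 : (-1:ℝ) < 2 * ((n:ℤ) - (j:ℤ)) := by push_cast; linarith
      have h3 : (2:ℝ) * ((n:ℤ) - (j:ℤ)) < 1 := by push_cast; linarith
      have h2' : (-1:ℤ) < 2 * ((n:ℤ) - (j:ℤ)) := by exact_mod_cast h2
      have h3' : (2:ℤ) * ((n:ℤ) - (j:ℤ)) < 1 := by exact_mod_cast h3
      have : j = n := by omega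
      exact hjn this
  have hBk : ∀ j : ℕ,
      Tendsto (fun κ : ℝ => Bk κ ((n:ℝ) - j) (1/2)) (nhdsWithin 0 (Set.Ioi 0)) (𝓝 (ind j)) :=
    fun j => bk_limit _ (hne j) (hne' j)
  have hS : Tendsto (fun κ : ℝ => ∑ j ∈ Finset.range N, Bk κ ((n:ℝ) - j) (1/2))
      (nhdsWithin 0 (Set.Ioi 0)) (𝓝 (∑ j ∈ Finset.range N, ind j)) :=
    tendsto_finset_sum _ fun j _ => hBk j
  have hV : Tendsto (fun κ : ℝ => ∑ j ∈ Finset.range N, Bk κ ((n:ℝ) - j) (1/2) • r j)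
      (nhdsWithin 0 (Set.Ioi 0)) (𝓝 (∑ j ∈ Finset.range N, ind j • r j)) :=
    tendsto_finset_sum _ fun j _ => (hBk j).smul_const (r j)
  have hSum : ∑ j ∈ Finset.range N, ind j = 1 := by
    rw [Finset.sum_congr rfl fun j _ => hind j]
    simp [Finset.sum_ite_eq' (Finset.range N) n, Finset.mem_range.mpr hnN]
  have hVSum : ∑ j ∈ Finset.range N, ind j • r j = r n := by
    rw [Finset.sum_congr rfl fun j _ => by rw [hind j]]
    simp [ite_smul, Finset.sum_ite_eq' (Finset.range N) n, Finset.mem_range.mpr hnN]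
  rw [hSum] at hS
  rw [hVSum] at hV
  have := (hS.inv₀ one_ne_zero).smul hV
  simpa [openShape, inv_one, one_smul] using this
end

section
/- Collapse of open shapes to the centroid as kappa tends to infinity: let r_0, ..., r_{N-1} be N >= 1 points in R^D. For every fixed real t, the limit as kappa -> +infinity of the open shape r_kappa(t) equals the centroid r* := (1/N) * (sum over j = 0, ..., N-1 of r_j). -/
lemma hasDerivAt_tanh_zero : HasDerivAt Real.tanh 1 0 := by
  have h : HasDerivAt (fun x => Real.sinh x / Real.cosh x)
      ((Real.cosh 0 * Real.cosh 0 - Real.sinh 0 * Real.sinh 0) / Real.cosh 0 ^ 2) 0 :=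
    (Real.hasDerivAt_sinh 0).div (Real.hasDerivAt_cosh 0) (by positivity)
  have h2 : (fun x => Real.sinh x / Real.cosh x) = Real.tanh := by
    funext x; exact (Real.tanh_eq_sinh_div_cosh x).symm
  rw [h2] at h
  simpa using h

lemma tendsto_mul_tanh_div (a : ℝ) :
    Filter.Tendsto (fun κ : ℝ => κ * Real.tanh (a / κ)) Filter.atTop (nhds a) := by
  rcases eq_or_ne a 0 with h | h
  · simp only [h]
    simpa [h] using (tendsto_const_nhds : Filter.Tendsto (fun _ : ℝ => (0:ℝ)) Filter.atTop _)
  · have hslope : Filter.Tendsto (fun u : ℝ => Real.tanh u / u) (nhdsWithin 0 {0}ᶜ) (nhds 1) := by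
      have h1 := hasDerivAt_iff_tendsto_slope.mp hasDerivAt_tanh_zero
      refine h1.congr' ?_
      filter_upwards [self_mem_nhdsWithin] with u hu
      simp [slope_def_field, div_eq_inv_mul]
    have hto0 : Filter.Tendsto (fun κ : ℝ => a / κ) Filter.atTop (nhds 0) := by
      simpa using tendsto_inv_atTop_zero.const_mul a |>.congr (fun κ => by ring)
    have hcomp : Filter.Tendsto (fun κ : ℝ => a / κ) Filter.atTop (nhdsWithin 0 {0}ᶜ) := by
      rw [tendsto_nhdsWithin_iff]
      refine ⟨hto0, ?_⟩
      filter_upwards [Filter.eventually_gt_atTop (0:ℝ)] with κ hκ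
      exact div_ne_zero h hκ.ne'
    have := (hslope.comp hcomp).const_mul a
    rw [mul_one] at this
    refine this.congr' ?_
    filter_upwards [Filter.eventually_gt_atTop (0:ℝ)] with κ hκ
    simp only [Function.comp_apply]
    field_simp

lemma tendsto_mul_Bk (x : ℝ) :
    Filter.Tendsto (fun κ : ℝ => κ * Bk κ x (1/2)) Filter.atTop (nhds (1/2)) := by
  have h1 := tendsto_mul_tanh_div (x + 1/2)
  have h2 := tendsto_mul_tanh_div (x - 1/2)
  have := ((h1.sub h2).const_mul (1/2 : ℝ))
  have heq : (1/2 : ℝ) * ((x + 1/2) - (x - 1/2)) = 1/2 := by ring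
  rw [heq] at this
  refine this.congr (fun κ => ?_)
  unfold Bk
  ring

/-- Collapse of open shapes to the centroid as `κ → +∞`: for every fixed `t`,
`r_κ(t)` converges to the centroid `r* = (1/N) ∑_j r_j`. -/
theorem openShape_tendsto_centroid (D N : ℕ) (hN : 1 ≤ N)
    (r : ℕ → EuclideanSpace ℝ (Fin D)) (t : ℝ) :
    Filter.Tendsto (fun κ : ℝ => openShape D N r κ t) Filter.atTop
      (nhds (((N : ℝ))⁻¹ • ∑ j ∈ Finset.range N, r j)) := by
  have hS : Filter.Tendsto (fun κ : ℝ => ∑ j ∈ Finset.range N, κ * Bk κ (t - j) (1/2))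
      Filter.atTop (nhds (N / 2)) := by
    have := tendsto_finset_sum (Finset.range N)
      (fun j (_ : j ∈ Finset.range N) => tendsto_mul_Bk (t - (j:ℝ)))
    simpa [Finset.sum_const, div_eq_mul_inv] using this
  have hV : Filter.Tendsto (fun κ : ℝ => ∑ j ∈ Finset.range N, (κ * Bk κ (t - j) (1/2)) • r j)
      Filter.atTop (nhds (∑ j ∈ Finset.range N, (1/2 : ℝ) • r j)) := by
    exact tendsto_finset_sum _ (fun j _ => (tendsto_mul_Bk (t - j)).smul_const (r j))
  have hNne : (N : ℝ) / 2 ≠ 0 := by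
    have : (0:ℝ) < N := by exact_mod_cast Nat.lt_of_lt_of_le Nat.zero_lt_one hN
    positivity
  have hlim := (hS.inv₀ hNne).smul hV
  have hval : ((N : ℝ) / 2)⁻¹ • ∑ j ∈ Finset.range N, (1/2 : ℝ) • r j
      = ((N : ℝ))⁻¹ • ∑ j ∈ Finset.range N, r j := by
    rw [← Finset.smul_sum, smul_smul]
    congr 1
    have : (0:ℝ) < N := by exact_mod_cast Nat.lt_of_lt_of_le Nat.zero_lt_one hN
    field_simp
  rw [hval] at hlim
  refine hlim.congr' ?_
  filter_upwards [Filter.eventually_gt_atTop (0:ℝ)] with κ hκ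
  unfold openShape
  have e1 : ∑ j ∈ Finset.range N, κ * Bk κ (t - j) (1/2)
      = κ * ∑ j ∈ Finset.range N, Bk κ (t - j) (1/2) := (Finset.mul_sum _ _ _).symm
  have e2 : ∑ j ∈ Finset.range N, (κ * Bk κ (t - j) (1/2)) • r j
      = κ • ∑ j ∈ Finset.range N, Bk κ (t - j) (1/2) • r j := by
    rw [Finset.smul_sum]
    exact Finset.sum_congr rfl fun j _ => mul_smul κ _ (r j)
  rw [e1, e2, smul_smul, mul_inv, mul_comm, ← mul_assoc, mul_inv_cancel₀ hκ.ne', one_mul]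
end
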